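/- Let μ and ν be probability measures on ℝ^d with μ ≠ ν, and write μ = μ∧ν + \tilde{μ}, ν = μ∧ν + \tilde{ν} with α := (μ∧ν)(ℝ^d) ∈ (0,1). Let \bar{μ} := \tilde{μ}/(1-α) and \bar{ν} := \tilde{ν}/(1-α). Then for any concave f : [0,∞) → [0,∞) with f(0) = 0, W_f(μ, ν) = (1-α)·W_f(\bar{μ}, \bar{ν}). -/

import Mathlib

open MeasureTheory
open scoped ENNReal

open ProbabilityTheory

set_option linter.unusedSectionVars false
set_option maxHeartbeats 1000000

section Helpers

variable {X : Type*} [MeasurableSpace X]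

lemma measure_eq_of_le_of_univ_le {μ ν : Measure X} [IsFiniteMeasure ν] (h : μ ≤ ν)
    (hu : ν Set.univ ≤ μ Set.univ) : μ = ν := by
  ext s hs
  refine le_antisymm (h s) ?_
  have h1 : μ s + μ sᶜ = μ Set.univ := measure_add_measure_compl hs
  have h2 : ν s + ν sᶜ = ν Set.univ := measure_add_measure_compl hs
  have hc : μ sᶜ ≤ ν sᶜ := h sᶜ
  have hfin : ν sᶜ ≠ ∞ := measure_ne_top ν sᶜ
  have hle : ν s + ν sᶜ ≤ μ s + ν sᶜ := by
    calc ν s + ν sᶜ = ν Set.univ := h2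
    _ ≤ μ Set.univ := hu
    _ = μ s + μ sᶜ := h1.symm
    _ ≤ μ s + ν sᶜ := by gcongr
  exact (ENNReal.add_le_add_iff_right hfin).mp hle

lemma map_withDensity_snd (B : Measure (X × X)) {g : X → ℝ≥0∞} (hg : Measurable g) :
    (B.withDensity (fun p => g p.2)).map Prod.snd = (B.map Prod.snd).withDensity g := by
  ext s hs
  rw [Measure.map_apply measurable_snd hs, withDensity_apply _ (measurable_snd hs),
    withDensity_apply _ hs, ← setLIntegral_map hs hg measurable_snd]

lemma bind_add_measure (m₁ m₂ : Measure X) (K : ProbabilityTheory.Kernel X X) :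
    (m₁ + m₂).bind K = m₁.bind K + m₂.bind K := by
  ext s hs
  simp [Measure.bind_apply hs K.measurable.aemeasurable, lintegral_add_measure]

lemma bind_mono_measure {m₁ m₂ : Measure X} (h : m₁ ≤ m₂) (K : ProbabilityTheory.Kernel X X) :
    m₁.bind K ≤ m₂.bind K := by
  refine Measure.le_iff.2 fun s hs => ?_
  rw [Measure.bind_apply hs K.measurable.aemeasurable, Measure.bind_apply hs K.measurable.aemeasurable]
  exact lintegral_mono' h le_rfl

lemma withDensity_mono_measure {m₁ m₂ : Measure X} (h : m₁ ≤ m₂) (g : X → ℝ≥0∞)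
    (hg : Measurable g) : m₁.withDensity g ≤ m₂.withDensity g := by
  refine Measure.le_iff.2 fun s hs => ?_
  rw [withDensity_apply _ hs, withDensity_apply _ hs]
  exact lintegral_mono' (Measure.restrict_mono le_rfl h) le_rfl

lemma map_sum_measure {Y : Type*} [MeasurableSpace Y] (μs : ℕ → Measure X) {g : X → Y}
    (hg : Measurable g) : (Measure.sum μs).map g = Measure.sum (fun n => (μs n).map g) := by
  ext s hs
  rw [Measure.map_apply hg hs, Measure.sum_apply _ (hg hs), Measure.sum_apply _ hs]
  simp [Measure.map_apply hg hs]

lemma sum_le_of_partial (μs : ℕ → Measure X) (ρ : Measure X)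
    (h : ∀ n, ∑ i ∈ Finset.range n, μs i ≤ ρ) : Measure.sum μs ≤ ρ := by
  refine Measure.le_iff.2 fun s hs => ?_
  rw [Measure.sum_apply _ hs, ENNReal.tsum_eq_iSup_sum]
  refine iSup_le fun F => ?_
  obtain ⟨n, hn⟩ := F.exists_nat_subset_range
  calc ∑ i ∈ F, μs i s ≤ ∑ i ∈ Finset.range n, μs i s :=
        Finset.sum_le_sum_of_subset hn
  _ = (∑ i ∈ Finset.range n, μs i) s := by
        simp [Finset.sum_apply']
  _ ≤ ρ s := (h n) s

end Helpers

section Chain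

variable {X : Type*} [MeasurableSpace X]

/-- The "still travelling" measures of the mass-chasing chain. -/
noncomputable def chainA (A0 : Measure (X × X)) (L : Kernel (X × X) (X × X))
    (w : X → ℝ≥0∞) : ℕ → Measure (X × X)
  | 0 => A0
  | n + 1 => ((chainA A0 L w n).bind L).withDensity (fun p => w p.2)

end Chain

section Engine

variable {X : Type*} [MeasurableSpace X] [StandardBorelSpace X] [Nonempty X]

theorem engine (c : X × X → ℝ≥0∞) (hc : Measurable c) (hc0 : ∀ x, c (x, x) = 0)
    (hctri : ∀ x y z, c (x, z) ≤ c (x, y) + c (y, z))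
    (μt νt σ : Measure X) [IsFiniteMeasure μt] [IsFiniteMeasure νt] [IsFiniteMeasure σ]
    (hmass : μt Set.univ = νt Set.univ)
    (γ : Measure (X × X)) [IsFiniteMeasure γ]
    (hγ1 : γ.map Prod.fst = μt + σ) (hγ2 : γ.map Prod.snd = νt + σ) :
    (⨅ (π : Measure (X × X)) (_ : π.map Prod.fst = μt) (_ : π.map Prod.snd = νt),
      ∫⁻ p, c p ∂π) ≤ ∫⁻ p, c p ∂γ := by
  classical
  -- the disintegration kernel of γ
  set K : Kernel X X := γ.condKernel with hK
  have hγfst : γ.fst = μt + σ := hγ1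
  have hdis : (μt + σ) ⊗ₘ K = γ := by
    rw [hK, ← hγfst]; exact γ.disintegrate γ.condKernel
  -- the density of νt w.r.t. νt + σ, truncated at 1
  set h : X → ℝ≥0∞ := fun y => min (νt.rnDeriv (νt + σ) y) 1 with hh
  have hhm : Measurable h := (Measure.measurable_rnDeriv _ _).min measurable_const
  have hh1 : ∀ y, h y ≤ 1 := fun y => min_le_right _ _
  set w : X → ℝ≥0∞ := fun y => 1 - h y with hw
  have hwm : Measurable w := measurable_const.sub hhm
  have hhw : ∀ y, h y + w y = 1 := fun y => add_tsub_cancel_of_le (hh1 y)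
  have hac : νt ≪ νt + σ := Measure.absolutelyContinuous_of_le (Measure.le_add_right le_rfl)
  have hwdh : (νt + σ).withDensity h = νt := by
    have h1 : (νt + σ).withDensity (νt.rnDeriv (νt + σ)) = νt :=
      Measure.withDensity_rnDeriv_eq _ _ hac
    have h2 : h =ᵐ[νt + σ] νt.rnDeriv (νt + σ) := by
      filter_upwards [Measure.rnDeriv_le_one_of_le (Measure.le_add_right le_rfl)] with y hy
      simpa [hh] using min_eq_left hy
    rw [withDensity_congr_ae h2, h1]
  have hwdw : (νt + σ).withDensity w = σ := by
    have hsum : (νt + σ).withDensity h + (νt + σ).withDensity w = νt + σ := by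
      rw [← withDensity_add_left hhm]
      have : (h + w) = fun _ => (1 : ℝ≥0∞) := funext hhw
      rw [this]
      exact withDensity_one
    rw [hwdh] at hsum
    ext s hs
    have h1 := congrArg (fun (m : Measure X) => m s) hsum
    have h2 : νt s ≠ ∞ := measure_ne_top _ _
    have h3 := congrArg (fun (m : Measure X) => m s) (rfl : νt + σ = νt + σ)
    have : νt s + (νt + σ).withDensity w s = νt s + σ s := by
      simpa [Measure.add_apply] using h1
    exact (ENNReal.add_right_inj h2).mp this
  -- transport of total source through K
  have hbind_tot : (μt + σ).bind K = νt + σ := by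
    ext s hs
    rw [Measure.bind_apply hs K.measurable.aemeasurable, ← hγ2, Measure.map_apply measurable_snd hs, ← hdis,
      Measure.compProd_apply (measurable_snd hs)]
    rfl
  -- the chain kernel : keep the first coordinate, move the second through K
  set L : Kernel (X × X) (X × X) :=
    (Kernel.deterministic Prod.fst measurable_fst) ×ₖ (K.comap Prod.snd measurable_snd) with hL
  have hLapp : ∀ p : X × X, L p = (Measure.dirac p.1).prod (K p.2) := by
    intro p
    rw [hL, Kernel.prod_apply, Kernel.deterministic_apply, Kernel.comap_apply]
  -- marginal computations for bind through L
  have hLfst : ∀ A : Measure (X × X), (A.bind L).map Prod.fst = A.map Prod.fst := by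
    intro A
    ext s hs
    rw [Measure.map_apply measurable_fst hs, Measure.bind_apply (measurable_fst hs) L.measurable.aemeasurable,
      Measure.map_apply measurable_fst hs]
    have : ∀ p : X × X, L p (Prod.fst ⁻¹' s) = Set.indicator (Prod.fst ⁻¹' s) 1 p := by
      intro p
      rw [hLapp, ← Set.prod_univ, Measure.prod_prod, measure_univ, mul_one,
        Measure.dirac_apply' _ hs]
      by_cases hp : p.1 ∈ s <;> simp [Set.indicator, hp]
    rw [lintegral_congr this, lintegral_indicator_one (measurable_fst hs)]
  have hLsnd : ∀ A : Measure (X × X), (A.bind L).map Prod.snd = (A.map Prod.snd).bind K := by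
    intro A
    ext s hs
    rw [Measure.map_apply measurable_snd hs, Measure.bind_apply (measurable_snd hs) L.measurable.aemeasurable,
      Measure.bind_apply hs K.measurable.aemeasurable, lintegral_map (Kernel.measurable_coe K hs) measurable_snd]
    refine lintegral_congr fun p => ?_
    rw [hLapp, ← Set.univ_prod, Measure.prod_prod, measure_univ, one_mul]
  have hLuniv : ∀ A : Measure (X × X), (A.bind L) Set.univ = A Set.univ := by
    intro A
    rw [Measure.bind_apply MeasurableSet.univ L.measurable.aemeasurable]
    simp
  -- one-step cost estimate
  have hGm : Measurable fun y => ∫⁻ z, c (y, z) ∂K y := Measurable.lintegral_kernel_prod_right' hc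
  have hstepcost : ∀ A : Measure (X × X),
      ∫⁻ p, c p ∂(A.bind L) ≤ ∫⁻ p, c p ∂A
        + ∫⁻ y, (∫⁻ z, c (y, z) ∂K y) ∂(A.map Prod.snd) := by
    intro A
    rw [Measure.lintegral_bind L.measurable.aemeasurable hc.aemeasurable]
    have hpt : ∀ p : X × X, ∫⁻ q, c q ∂(L p) = ∫⁻ z, c (p.1, z) ∂(K p.2) := by
      intro p
      rw [hLapp, lintegral_prod _ hc.aemeasurable,
        lintegral_dirac' _ (Measurable.lintegral_prod_right' hc)]
    calc ∫⁻ p, (∫⁻ q, c q ∂L p) ∂A = ∫⁻ p, (∫⁻ z, c (p.1, z) ∂K p.2) ∂A :=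
          lintegral_congr hpt
    _ ≤ ∫⁻ p, (c p + ∫⁻ z, c (p.2, z) ∂K p.2) ∂A := by
          refine lintegral_mono fun p => ?_
          calc ∫⁻ z, c (p.1, z) ∂K p.2 ≤ ∫⁻ z, (c p + c (p.2, z)) ∂K p.2 := by
                refine lintegral_mono fun z => ?_
                simpa using hctri p.1 p.2 z
          _ = c p + ∫⁻ z, c (p.2, z) ∂K p.2 := by
                rw [lintegral_add_left measurable_const, lintegral_const, measure_univ, mul_one]
    _ = ∫⁻ p, c p ∂A + ∫⁻ y, (∫⁻ z, c (y, z) ∂K y) ∂(A.map Prod.snd) := by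
          rw [lintegral_add_left hc, lintegral_map hGm measurable_snd]
  -- the chain
  set A0 : Measure (X × X) := μt.map (fun x => (x, x)) with hA0
  have hdiagm : Measurable fun x : X => (x, x) := measurable_id.prodMk measurable_id
  set A : ℕ → Measure (X × X) := chainA A0 L w with hA
  set D : ℕ → Measure (X × X) := fun n => ((A n).bind L).withDensity (fun p => h p.2) with hD
  set m : ℕ → Measure X := fun n => (A n).map Prod.snd with hm
  have hArec : ∀ n, A (n + 1) = ((A n).bind L).withDensity (fun p => w p.2) := fun n => rfl
  have hsplitA : ∀ n, A (n + 1) + D n = (A n).bind L := by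
    intro n
    rw [hArec]
    show (((A n).bind ⇑L).withDensity fun p => w p.2)
        + ((A n).bind ⇑L).withDensity (fun p => h p.2) = (A n).bind ⇑L
    have e1 : (fun p : X × X => w p.2) = w ∘ Prod.snd := rfl
    have e2 : (fun p : X × X => h p.2) = h ∘ Prod.snd := rfl
    rw [e1, e2, ← withDensity_add_left (hwm.comp measurable_snd)]
    have : (w ∘ Prod.snd + h ∘ Prod.snd) = (1 : X × X → ℝ≥0∞) := by
      funext p
      simp only [Pi.add_apply, Function.comp_apply]
      rw [add_comm]
      exact hhw p.2
    rw [this, withDensity_one]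
  have hm0 : m 0 = μt := by
    rw [hm]
    show (μt.map fun x => (x, x)).map Prod.snd = μt
    rw [Measure.map_map measurable_snd hdiagm]
    have : (Prod.snd ∘ fun x : X => (x, x)) = id := rfl
    rw [this, Measure.map_id]
  have hA0fst : (A 0).map Prod.fst = μt := by
    show (μt.map fun x => (x, x)).map Prod.fst = μt
    rw [Measure.map_map measurable_fst hdiagm]
    have : (Prod.fst ∘ fun x : X => (x, x)) = id := rfl
    rw [this, Measure.map_id]
  have hA0univ : A 0 Set.univ = μt Set.univ := by
    show (μt.map fun x => (x, x)) Set.univ = _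
    rw [Measure.map_apply hdiagm MeasurableSet.univ]
    simp
  have hmuniv : ∀ n, m n Set.univ = A n Set.univ := by
    intro n
    rw [hm]
    show ((A n).map Prod.snd) Set.univ = _
    rw [Measure.map_apply measurable_snd MeasurableSet.univ]
    simp
  have hmrec : ∀ n, m (n + 1) = ((m n).bind K).withDensity w := by
    intro n
    show (A (n + 1)).map Prod.snd = _
    rw [hArec, map_withDensity_snd _ hwm, hLsnd]
  have hDsnd : ∀ n, (D n).map Prod.snd = ((m n).bind K).withDensity h := by
    intro n
    rw [hD]
    simp only
    rw [map_withDensity_snd _ hhm, hLsnd]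
  have hDfstA : ∀ n, (A (n + 1)).map Prod.fst + (D n).map Prod.fst = (A n).map Prod.fst := by
    intro n
    rw [← Measure.map_add _ _ measurable_fst, hsplitA, hLfst]
  -- partial sums of the m's
  set S : ℕ → Measure X := fun n => ∑ i ∈ Finset.range n, m i with hSdef
  have hbind0 : (0 : Measure X).bind K = 0 := by
    ext s hs
    simp [Measure.bind_apply hs K.measurable.aemeasurable]
  have hwd0 : ∀ g : X → ℝ≥0∞, (0 : Measure X).withDensity g = 0 := by
    intro g
    ext s hs
    rw [withDensity_apply _ hs]
    simp
  have hΦsum : ∀ (g : X → ℝ≥0∞) (n : ℕ),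
      ∑ i ∈ Finset.range n, ((m i).bind K).withDensity g = ((S n).bind K).withDensity g := by
    intro g n
    induction n with
    | zero => simp [hSdef, hbind0, hwd0]
    | succ n ih =>
        rw [Finset.sum_range_succ, ih]
        have hS1 : S (n + 1) = S n + m n := Finset.sum_range_succ _ _
        rw [hS1, bind_add_measure, withDensity_add_measure]
  have hS_le : ∀ n, S n ≤ μt + σ := by
    intro n
    induction n with
    | zero =>
        show (0 : Measure X) ≤ μt + σ
        exact Measure.zero_le _
    | succ n ih =>
        have h1 : S (n + 1) = m 0 + ∑ i ∈ Finset.range n, m (i + 1) := by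
          rw [hSdef]
          simp only
          rw [Finset.sum_range_succ']
          exact add_comm _ _
        have h2 : ∀ i, m (i + 1) = ((m i).bind K).withDensity w := hmrec
        have h3 : ∑ i ∈ Finset.range n, m (i + 1) = ((S n).bind K).withDensity w := by
          calc ∑ i ∈ Finset.range n, m (i + 1)
              = ∑ i ∈ Finset.range n, ((m i).bind K).withDensity w :=
                Finset.sum_congr rfl fun i _ => h2 i
          _ = ((S n).bind K).withDensity w := hΦsum w n
        rw [h1, h3, hm0]
        have h4 : ((S n).bind K).withDensity w ≤ σ := by
          calc ((S n).bind K).withDensity w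
              ≤ (((μt + σ)).bind K).withDensity w :=
                withDensity_mono_measure (bind_mono_measure ih K) w hwm
          _ = (νt + σ).withDensity w := by rw [hbind_tot]
          _ = σ := hwdw
        exact add_le_add le_rfl h4
  -- cost bookkeeping
  have hcostA0 : ∫⁻ p, c p ∂(A 0) = 0 := by
    show ∫⁻ p, c p ∂(μt.map fun x => (x, x)) = 0
    rw [lintegral_map hc hdiagm]
    simp [hc0]
  have hcostsplit : ∀ n, ∫⁻ p, c p ∂(A (n + 1)) + ∫⁻ p, c p ∂(D n)
      = ∫⁻ p, c p ∂((A n).bind L) := by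
    intro n
    rw [← hsplitA n, lintegral_add_measure]
  have hGtot : ∫⁻ y, (∫⁻ z, c (y, z) ∂K y) ∂(μt + σ) = ∫⁻ p, c p ∂γ := by
    rw [← hdis, Measure.lintegral_compProd hc]
  have hcosttot : ∀ n, (∑ i ∈ Finset.range n, ∫⁻ p, c p ∂(D i)) + ∫⁻ p, c p ∂(A n)
      ≤ ∫⁻ y, (∫⁻ z, c (y, z) ∂K y) ∂(S n) := by
    intro n
    induction n with
    | zero =>
        rw [hcostA0]
        simp
    | succ n ih =>
        have h1 : (∑ i ∈ Finset.range (n + 1), ∫⁻ p, c p ∂(D i)) + ∫⁻ p, c p ∂(A (n + 1))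
            = (∑ i ∈ Finset.range n, ∫⁻ p, c p ∂(D i))
              + (∫⁻ p, c p ∂(A (n + 1)) + ∫⁻ p, c p ∂(D n)) := by
          rw [Finset.sum_range_succ]
          ring
        rw [h1, hcostsplit n]
        have hS1 : S (n + 1) = S n + m n := Finset.sum_range_succ _ _
        rw [hS1, lintegral_add_measure]
        calc (∑ i ∈ Finset.range n, ∫⁻ p, c p ∂(D i)) + ∫⁻ p, c p ∂((A n).bind L)
            ≤ (∑ i ∈ Finset.range n, ∫⁻ p, c p ∂(D i))
              + (∫⁻ p, c p ∂(A n) + ∫⁻ y, (∫⁻ z, c (y, z) ∂K y) ∂(m n)) :=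
              add_le_add le_rfl (hstepcost (A n))
        _ = ((∑ i ∈ Finset.range n, ∫⁻ p, c p ∂(D i)) + ∫⁻ p, c p ∂(A n))
              + ∫⁻ y, (∫⁻ z, c (y, z) ∂K y) ∂(m n) := by ring
        _ ≤ (∫⁻ y, (∫⁻ z, c (y, z) ∂K y) ∂(S n))
              + ∫⁻ y, (∫⁻ z, c (y, z) ∂K y) ∂(m n) := add_le_add ih le_rfl
  have hcostD : ∀ n, ∑ i ∈ Finset.range n, ∫⁻ p, c p ∂(D i) ≤ ∫⁻ p, c p ∂γ := by
    intro n
    calc ∑ i ∈ Finset.range n, ∫⁻ p, c p ∂(D i)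
        ≤ (∑ i ∈ Finset.range n, ∫⁻ p, c p ∂(D i)) + ∫⁻ p, c p ∂(A n) := le_self_add
    _ ≤ ∫⁻ y, (∫⁻ z, c (y, z) ∂K y) ∂(S n) := hcosttot n
    _ ≤ ∫⁻ y, (∫⁻ z, c (y, z) ∂K y) ∂(μt + σ) := lintegral_mono' (hS_le n) le_rfl
    _ = ∫⁻ p, c p ∂γ := hGtot
  -- mass bookkeeping
  have hDuniv : ∀ n, D n Set.univ + A (n + 1) Set.univ = A n Set.univ := by
    intro n
    have := congrArg (fun (ρ : Measure (X × X)) => ρ Set.univ) (hsplitA n)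
    simp only [Measure.add_apply] at this
    rw [add_comm] at this
    rw [this, hLuniv]
  have hApartial : ∀ n, (∑ i ∈ Finset.range n, D i Set.univ) + A n Set.univ
      = μt Set.univ := by
    intro n
    induction n with
    | zero => simpa using hA0univ
    | succ n ih =>
        rw [Finset.sum_range_succ, ← ih]
        rw [← hDuniv n]
        ring
  have htsum_m : ∑' n, A n Set.univ ≤ (μt + σ) Set.univ := by
    rw [ENNReal.tsum_eq_iSup_sum]
    refine iSup_le fun F => ?_
    obtain ⟨n, hn⟩ := F.exists_nat_subset_range
    calc ∑ i ∈ F, A i Set.univ ≤ ∑ i ∈ Finset.range n, A i Set.univ :=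
          Finset.sum_le_sum_of_subset hn
    _ = ∑ i ∈ Finset.range n, m i Set.univ := by
          refine Finset.sum_congr rfl fun i _ => (hmuniv i).symm
    _ = S n Set.univ := by
          rw [hSdef]
          simp [Measure.finset_sum_apply]
    _ ≤ (μt + σ) Set.univ := (hS_le n) Set.univ
  have hA_tend : Filter.Tendsto (fun n => A n Set.univ) Filter.atTop (nhds 0) :=
    ENNReal.tendsto_atTop_zero_of_tsum_ne_top
      (lt_of_le_of_lt htsum_m (measure_lt_top _ _)).ne
  -- the candidate coupling
  set π : Measure (X × X) := Measure.sum D with hπ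
  have hπuniv : μt Set.univ ≤ π Set.univ := by
    have hbound : ∀ n, μt Set.univ ≤ π Set.univ + A n Set.univ := by
      intro n
      rw [← hApartial n]
      refine add_le_add ?_ le_rfl
      rw [hπ, Measure.sum_apply _ MeasurableSet.univ]
      exact ENNReal.sum_le_tsum _
    have htend : Filter.Tendsto (fun n => π Set.univ + A n Set.univ) Filter.atTop
        (nhds (π Set.univ + 0)) := Filter.Tendsto.const_add _ hA_tend
    rw [add_zero] at htend
    exact ge_of_tendsto' htend hbound
  -- first marginal of π is μt
  have hDfst_partial : ∀ n, (∑ i ∈ Finset.range n, (D i).map Prod.fst)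
      + (A n).map Prod.fst = μt := by
    intro n
    induction n with
    | zero => simpa using hA0fst
    | succ n ih =>
        rw [Finset.sum_range_succ, ← ih, ← hDfstA n]
        abel
  have hπfst : π.map Prod.fst = μt := by
    refine measure_eq_of_le_of_univ_le ?_ ?_
    · rw [hπ, map_sum_measure _ measurable_fst]
      refine sum_le_of_partial _ _ fun n => ?_
      calc ∑ i ∈ Finset.range n, (D i).map Prod.fst
          ≤ (∑ i ∈ Finset.range n, (D i).map Prod.fst) + (A n).map Prod.fst :=
            Measure.le_add_right le_rfl
      _ = μt := hDfst_partial n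
    · rw [Measure.map_apply measurable_fst MeasurableSet.univ]
      simpa using hπuniv
  -- second marginal of π is νt
  have hDsnd_partial : ∀ n, ∑ i ∈ Finset.range n, (D i).map Prod.snd
      = ((S n).bind K).withDensity h := by
    intro n
    calc ∑ i ∈ Finset.range n, (D i).map Prod.snd
        = ∑ i ∈ Finset.range n, ((m i).bind K).withDensity h :=
          Finset.sum_congr rfl fun i _ => hDsnd i
    _ = ((S n).bind K).withDensity h := hΦsum h n
  have hπsnd : π.map Prod.snd = νt := by
    refine measure_eq_of_le_of_univ_le ?_ ?_
    · rw [hπ, map_sum_measure _ measurable_snd]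
      refine sum_le_of_partial _ _ fun n => ?_
      rw [hDsnd_partial n]
      calc ((S n).bind K).withDensity h
          ≤ ((μt + σ).bind K).withDensity h :=
            withDensity_mono_measure (bind_mono_measure (hS_le n) K) h hhm
      _ = (νt + σ).withDensity h := by rw [hbind_tot]
      _ = νt := hwdh
    · rw [Measure.map_apply measurable_snd MeasurableSet.univ]
      simpa using hmass.symm.le.trans hπuniv
  -- cost of π
  have hπcost : ∫⁻ p, c p ∂π ≤ ∫⁻ p, c p ∂γ := by
    rw [hπ, lintegral_sum_measure]
    rw [ENNReal.tsum_eq_iSup_sum]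
    refine iSup_le fun F => ?_
    obtain ⟨n, hn⟩ := F.exists_nat_subset_range
    calc ∑ i ∈ F, ∫⁻ p, c p ∂(D i) ≤ ∑ i ∈ Finset.range n, ∫⁻ p, c p ∂(D i) :=
          Finset.sum_le_sum_of_subset hn
    _ ≤ ∫⁻ p, c p ∂γ := hcostD n
  -- conclude
  calc (⨅ (π' : Measure (X × X)) (_ : π'.map Prod.fst = μt) (_ : π'.map Prod.snd = νt),
        ∫⁻ p, c p ∂π')
      ≤ ⨅ (_ : π.map Prod.fst = μt) (_ : π.map Prod.snd = νt), ∫⁻ p, c p ∂π := iInf_le _ π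
  _ ≤ ⨅ (_ : π.map Prod.snd = νt), ∫⁻ p, c p ∂π := iInf_le _ hπfst
  _ ≤ ∫⁻ p, c p ∂π := iInf_le _ hπsnd
  _ ≤ ∫⁻ p, c p ∂γ := hπcost

end Engine


section Fprops

variable {f : ℝ → ℝ}

lemma f_nonneg (hf0 : f 0 = 0) (hf_pos : ∀ r, 0 < r → 0 < f r) :
    ∀ r, 0 ≤ r → 0 ≤ f r := by
  intro r hr
  rcases eq_or_lt_of_le hr with rfl | h
  · exact le_of_eq hf0.symm
  · exact (hf_pos r h).le

lemma f_mono (hf_concave : ConcaveOn ℝ (Set.Ici (0:ℝ)) f) (hf0 : f 0 = 0)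
    (hf_pos : ∀ r, 0 < r → 0 < f r) :
    ∀ r s : ℝ, 0 ≤ r → r ≤ s → f r ≤ f s := by
  intro r s hr hrs
  rcases eq_or_lt_of_le hrs with rfl | hlt
  · exact le_rfl
  by_contra hcon
  push_neg at hcon
  rcases eq_or_lt_of_le hr with rfl | hr0
  · rw [hf0] at hcon
    exact absurd (hf_pos s hlt) (by linarith)
  have hΔpos : 0 < f r - f s := by linarith
  set t : ℝ := max (s + 1) ((s * f r - r * f s + 1) / (f r - f s)) with ht
  have hts : s < t := lt_of_lt_of_le (by linarith) (le_max_left _ _)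
  have htr : 0 < t - r := by linarith
  have htineq : s * f r - r * f s + 1 ≤ t * (f r - f s) := by
    have h1 : (s * f r - r * f s + 1) / (f r - f s) ≤ t := le_max_right _ _
    calc s * f r - r * f s + 1
        = ((s * f r - r * f s + 1) / (f r - f s)) * (f r - f s) := by
          field_simp
    _ ≤ t * (f r - f s) := by
          exact mul_le_mul_of_nonneg_right h1 hΔpos.le
  set a : ℝ := (t - s) / (t - r) with ha'
  set b : ℝ := (s - r) / (t - r) with hb'
  have ha : 0 ≤ a := div_nonneg (by linarith) htr.le
  have hb : 0 ≤ b := div_nonneg (by linarith) htr.le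
  have hab : a + b = 1 := by
    rw [ha', hb']
    field_simp
    ring
  have hcomb : a * r + b * t = s := by
    rw [ha', hb']
    field_simp
    ring
  have hconc := hf_concave.2 (Set.mem_Ici.2 hr) (Set.mem_Ici.2 (by linarith : (0:ℝ) ≤ t)) ha hb hab
  simp only [smul_eq_mul] at hconc
  rw [hcomb] at hconc
  -- hconc : a * f r + b * f t ≤ f s
  have hft : 0 ≤ f t := (hf_pos t (by linarith)).le
  have hmul := mul_le_mul_of_nonneg_right hconc htr.le
  have haa : a * (t - r) = t - s := by
    rw [ha']
    field_simp
  have hbb : b * (t - r) = s - r := by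
    rw [hb']
    field_simp
  have hexp : (a * f r + b * f t) * (t - r) = (t - s) * f r + (s - r) * f t := by
    calc (a * f r + b * f t) * (t - r)
        = (a * (t - r)) * f r + (b * (t - r)) * f t := by ring
    _ = (t - s) * f r + (s - r) * f t := by rw [haa, hbb]
  rw [hexp] at hmul
  -- hmul : (t - s) * f r + (s - r) * f t ≤ f s * (t - r)
  nlinarith [mul_nonneg (by linarith : (0:ℝ) ≤ s - r) hft]

lemma f_subadd (hf_concave : ConcaveOn ℝ (Set.Ici (0:ℝ)) f) (hf0 : f 0 = 0)
    (hf_pos : ∀ r, 0 < r → 0 < f r) :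
    ∀ x y : ℝ, 0 ≤ x → 0 ≤ y → f (x + y) ≤ f x + f y := by
  intro x y hx hy
  rcases eq_or_lt_of_le hx with rfl | hx0
  · simp [hf0]
  rcases eq_or_lt_of_le hy with rfl | hy0
  · simp [hf0]
  have hs : 0 < x + y := by linarith
  have key : ∀ u v : ℝ, 0 < u → 0 < v → u + v = x + y → (u / (x + y)) * f (x + y) ≤ f u := by
    intro u v hu hv huv
    have ha : (0:ℝ) ≤ v / (x + y) := by positivity
    have hb : (0:ℝ) ≤ u / (x + y) := by positivity
    have hab : v / (x + y) + u / (x + y) = 1 := by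
      field_simp
      linarith
    have hconc := hf_concave.2 (Set.mem_Ici.2 le_rfl)
      (Set.mem_Ici.2 hs.le) ha hb hab
    simp only [smul_eq_mul, mul_zero, zero_add] at hconc
    have hcomb : u / (x + y) * (x + y) = u := by field_simp
    rw [hcomb, hf0, mul_zero, zero_add] at hconc
    exact hconc
  have h1 := key x y hx0 hy0 rfl
  have h2 := key y x hy0 hx0 (by ring)
  have hsum : x / (x + y) * f (x + y) + y / (x + y) * f (x + y) = f (x + y) := by
    field_simp
  linarith

end Fprops



/-- The Kantorovich (`L¹`-Wasserstein) "distance" associated with a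
cost function `f` applied to the Euclidean distance. -/
noncomputable def Wf {d : ℕ} (f : ℝ → ℝ)
    (μ₁ μ₂ : Measure (EuclideanSpace ℝ (Fin d))) : ℝ≥0∞ :=
  ⨅ (π : Measure (EuclideanSpace ℝ (Fin d) × EuclideanSpace ℝ (Fin d)))
    (_ : π.map Prod.fst = μ₁) (_ : π.map Prod.snd = μ₂),
    ∫⁻ p, ENNReal.ofReal (f (dist p.1 p.2)) ∂π

section WfLemmas

variable {d : ℕ} {f : ℝ → ℝ}

/-- The cost function on pairs, written with a globally monotone modification of `f`
so that measurability is automatic. -/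
noncomputable def Wcost (f : ℝ → ℝ) (p : EuclideanSpace ℝ (Fin d) × EuclideanSpace ℝ (Fin d)) :
    ℝ≥0∞ := ENNReal.ofReal ((fun r : ℝ => if r ≤ 0 then 0 else f r) (dist p.1 p.2))

lemma Wcost_eq (hf0 : f 0 = 0) (p : EuclideanSpace ℝ (Fin d) × EuclideanSpace ℝ (Fin d)) :
    Wcost f p = ENNReal.ofReal (f (dist p.1 p.2)) := by
  rw [Wcost]
  by_cases hd : dist p.1 p.2 ≤ 0
  · have : dist p.1 p.2 = 0 := le_antisymm hd dist_nonneg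
    rw [this]
    simp [hf0]
  · simp [hd]

lemma Wf_eq_wcost (hf0 : f 0 = 0) (μ₁ μ₂ : Measure (EuclideanSpace ℝ (Fin d))) :
    Wf f μ₁ μ₂ = ⨅ (π : Measure (EuclideanSpace ℝ (Fin d) × EuclideanSpace ℝ (Fin d)))
      (_ : π.map Prod.fst = μ₁) (_ : π.map Prod.snd = μ₂), ∫⁻ p, Wcost f p ∂π := by
  rw [Wf]
  congr 1
  funext π
  congr 1
  funext _
  congr 1
  funext _
  exact lintegral_congr fun p => (Wcost_eq hf0 p).symm

section costprops

variable (hf_concave : ConcaveOn ℝ (Set.Ici (0:ℝ)) f)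
    (hf0 : f 0 = 0) (hf_pos : ∀ r, 0 < r → 0 < f r)
include hf_concave hf0 hf_pos

lemma Wcost_measurable : Measurable (Wcost f (d := d)) := by
  have hmono : Monotone (fun r : ℝ => if r ≤ 0 then 0 else f r) := by
    intro r s hrs
    by_cases hr : r ≤ 0
    · by_cases hs : s ≤ 0
      · simp [hr, hs]
      · simp only [hr, if_pos, hs, if_neg, if_true]
        push_neg at hs
        exact f_nonneg hf0 hf_pos s hs.le
    · have hs : ¬ s ≤ 0 := fun h => hr (hrs.trans h)
      simp only [hr, hs, if_neg]
      push_neg at hr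
      exact f_mono hf_concave hf0 hf_pos r s hr.le hrs
  exact ENNReal.measurable_ofReal.comp (hmono.measurable.comp measurable_dist)

lemma Wcost_self (x : EuclideanSpace ℝ (Fin d)) : Wcost f (x, x) = 0 := by
  rw [Wcost_eq hf0]
  simp [hf0]

lemma Wcost_triangle (x y z : EuclideanSpace ℝ (Fin d)) :
    Wcost f (x, z) ≤ Wcost f (x, y) + Wcost f (y, z) := by
  rw [Wcost_eq hf0, Wcost_eq hf0, Wcost_eq hf0]
  have h1 : f (dist x z) ≤ f (dist x y + dist y z) :=
    f_mono hf_concave hf0 hf_pos _ _ dist_nonneg (dist_triangle x y z)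
  have h2 : f (dist x y + dist y z) ≤ f (dist x y) + f (dist y z) :=
    f_subadd hf_concave hf0 hf_pos _ _ dist_nonneg dist_nonneg
  calc ENNReal.ofReal (f (dist x z)) ≤ ENNReal.ofReal (f (dist x y) + f (dist y z)) :=
        ENNReal.ofReal_le_ofReal (h1.trans h2)
  _ ≤ ENNReal.ofReal (f (dist x y)) + ENNReal.ofReal (f (dist y z)) :=
        ENNReal.ofReal_add_le

/-- Adding a common part `σ` does not change the transport cost. -/
lemma Wf_add_common (μt νt σ : Measure (EuclideanSpace ℝ (Fin d)))
    [IsFiniteMeasure μt] [IsFiniteMeasure νt] [IsFiniteMeasure σ]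
    (hmass : μt Set.univ = νt Set.univ) :
    Wf f (μt + σ) (νt + σ) = Wf f μt νt := by
  have hc := Wcost_measurable (d := d) hf_concave hf0 hf_pos
  have hdiagm : Measurable fun x : EuclideanSpace ℝ (Fin d) => (x, x) :=
    measurable_id.prodMk measurable_id
  rw [Wf_eq_wcost hf0, Wf_eq_wcost hf0]
  apply le_antisymm
  · -- put σ on the diagonal
    refine le_iInf fun π => le_iInf fun h1 => le_iInf fun h2 => ?_
    set π' := π + σ.map (fun x => (x, x)) with hπ'
    have hfst : π'.map Prod.fst = μt + σ := by
      rw [hπ', Measure.map_add _ _ measurable_fst, h1,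
        Measure.map_map measurable_fst hdiagm]
      have : (Prod.fst ∘ fun x : EuclideanSpace ℝ (Fin d) => (x, x)) = id := rfl
      rw [this, Measure.map_id]
    have hsnd : π'.map Prod.snd = νt + σ := by
      rw [hπ', Measure.map_add _ _ measurable_snd, h2,
        Measure.map_map measurable_snd hdiagm]
      have : (Prod.snd ∘ fun x : EuclideanSpace ℝ (Fin d) => (x, x)) = id := rfl
      rw [this, Measure.map_id]
    have hcost : ∫⁻ p, Wcost f p ∂π' = ∫⁻ p, Wcost f p ∂π := by
      rw [hπ', lintegral_add_measure, lintegral_map hc hdiagm]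
      simp [Wcost_self hf_concave hf0 hf_pos]
    calc (⨅ (π'' : Measure _) (_ : π''.map Prod.fst = μt + σ)
          (_ : π''.map Prod.snd = νt + σ), ∫⁻ p, Wcost f p ∂π'')
        ≤ ⨅ (_ : π'.map Prod.fst = μt + σ) (_ : π'.map Prod.snd = νt + σ),
            ∫⁻ p, Wcost f p ∂π' := iInf_le _ π'
    _ ≤ ⨅ (_ : π'.map Prod.snd = νt + σ), ∫⁻ p, Wcost f p ∂π' := iInf_le _ hfst
    _ ≤ ∫⁻ p, Wcost f p ∂π' := iInf_le _ hsnd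
    _ = ∫⁻ p, Wcost f p ∂π := hcost
  · -- the reduction argument
    refine le_iInf fun γ => le_iInf fun h1 => le_iInf fun h2 => ?_
    haveI : IsFiniteMeasure γ := by
      constructor
      have : γ.map Prod.fst Set.univ = γ Set.univ := by
        rw [Measure.map_apply measurable_fst MeasurableSet.univ]
        simp
      rw [← this, h1]
      exact measure_lt_top _ _
    exact engine (Wcost f) hc (Wcost_self hf_concave hf0 hf_pos)
      (Wcost_triangle hf_concave hf0 hf_pos) μt νt σ hmass γ h1 h2

end costprops

lemma Wf_smul_le (a b : Measure (EuclideanSpace ℝ (Fin d))) (c : ℝ≥0∞) (hc0 : c ≠ 0)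
    (hci : c ≠ ∞) : Wf f (c • a) (c • b) ≤ c * Wf f a b := by
  conv_rhs => rw [Wf]
  rw [ENNReal.mul_iInf_of_ne hc0 hci]
  refine le_iInf fun π => ?_
  rw [ENNReal.mul_iInf_of_ne hc0 hci]
  refine le_iInf fun h1 => ?_
  rw [ENNReal.mul_iInf_of_ne hc0 hci]
  refine le_iInf fun h2 => ?_
  rw [← smul_eq_mul, ← lintegral_smul_measure]
  have hfst : (c • π).map Prod.fst = c • a := by rw [Measure.map_smul, h1]
  have hsnd : (c • π).map Prod.snd = c • b := by rw [Measure.map_smul, h2]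
  calc Wf f (c • a) (c • b)
      ≤ ⨅ (_ : (c • π).map Prod.fst = c • a) (_ : (c • π).map Prod.snd = c • b),
          ∫⁻ p, ENNReal.ofReal (f (dist p.1 p.2)) ∂(c • π) := iInf_le _ (c • π)
  _ ≤ ⨅ (_ : (c • π).map Prod.snd = c • b),
          ∫⁻ p, ENNReal.ofReal (f (dist p.1 p.2)) ∂(c • π) := iInf_le _ hfst
  _ ≤ ∫⁻ p, ENNReal.ofReal (f (dist p.1 p.2)) ∂(c • π) := iInf_le _ hsnd

lemma Wf_smul (a b : Measure (EuclideanSpace ℝ (Fin d))) (c : ℝ≥0∞) (hc0 : c ≠ 0)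
    (hci : c ≠ ∞) : Wf f (c • a) (c • b) = c * Wf f a b := by
  refine le_antisymm (Wf_smul_le a b c hc0 hci) ?_
  have h2 := Wf_smul_le (f := f) (c • a) (c • b) c⁻¹ (ENNReal.inv_ne_zero.2 hci)
    (ENNReal.inv_ne_top.2 hc0)
  rw [smul_smul, smul_smul, ENNReal.inv_mul_cancel hc0 hci, one_smul, one_smul] at h2
  calc c * Wf f a b ≤ c * (c⁻¹ * Wf f (c • a) (c • b)) := by
        exact mul_le_mul_right h2 c
  _ = Wf f (c • a) (c • b) := by
        rw [← mul_assoc, ENNReal.mul_inv_cancel hc0 hci, one_mul]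

end WfLemmas


/-- Decomposing `μ = μ∧ν + μ̃`, `ν = μ∧ν + ν̃` with `α = (μ∧ν)(ℝ^d) ∈ (0,1)` and
normalizing `μ̄ = μ̃/(1-α)`, `ν̄ = ν̃/(1-α)`, one has `W_f(μ,ν) = (1-α) W_f(μ̄,ν̄)`
for concave `f` with `f(0) = 0` and `f > 0` on `(0,∞)`. -/
theorem Wf_common_mass_decomposition {d : ℕ}
    (μ ν : Measure (EuclideanSpace ℝ (Fin d)))
    [IsProbabilityMeasure μ] [IsProbabilityMeasure ν] (hne : μ ≠ ν)
    (α : ℝ≥0∞) (hα : α = (μ ⊓ ν) Set.univ) (hα0 : 0 < α) (hα1 : α < 1)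
    (f : ℝ → ℝ) (hf_concave : ConcaveOn ℝ (Set.Ici (0:ℝ)) f)
    (hf0 : f 0 = 0) (hf_pos : ∀ r, 0 < r → 0 < f r) :
    Wf f μ ν = (1 - α) * Wf f ((1 - α)⁻¹ • (μ - μ ⊓ ν)) ((1 - α)⁻¹ • (ν - μ ⊓ ν)) := by
  set σ : Measure (EuclideanSpace ℝ (Fin d)) := μ ⊓ ν with hσ
  have hσμ : σ ≤ μ := inf_le_left
  have hσν : σ ≤ ν := inf_le_right
  haveI : IsFiniteMeasure σ := ⟨lt_of_le_of_lt (hσμ Set.univ) (measure_lt_top μ _)⟩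
  set μt : Measure (EuclideanSpace ℝ (Fin d)) := μ - σ with hμt
  set νt : Measure (EuclideanSpace ℝ (Fin d)) := ν - σ with hνt
  haveI : IsFiniteMeasure μt :=
    ⟨lt_of_le_of_lt (Measure.sub_le Set.univ) (measure_lt_top μ _)⟩
  haveI : IsFiniteMeasure νt :=
    ⟨lt_of_le_of_lt (Measure.sub_le Set.univ) (measure_lt_top ν _)⟩
  have hμ : μt + σ = μ := Measure.sub_add_cancel_of_le hσμ
  have hν : νt + σ = ν := Measure.sub_add_cancel_of_le hσν
  have hμtu : μt Set.univ = 1 - α := by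
    rw [hμt, Measure.sub_apply MeasurableSet.univ hσμ, measure_univ, hα]
  have hνtu : νt Set.univ = 1 - α := by
    rw [hνt, Measure.sub_apply MeasurableSet.univ hσν, measure_univ, hα]
  have hmass : μt Set.univ = νt Set.univ := by rw [hμtu, hνtu]
  have h1α0 : (1 : ℝ≥0∞) - α ≠ 0 := by
    intro h
    rw [tsub_eq_zero_iff_le] at h
    exact absurd h (not_le.2 hα1)
  have h1αi : (1 : ℝ≥0∞) - α ≠ ∞ := (lt_of_le_of_lt tsub_le_self ENNReal.one_lt_top).ne
  have hsc : Wf f ((1 - α) • ((1 - α)⁻¹ • μt)) ((1 - α) • ((1 - α)⁻¹ • νt))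
      = (1 - α) * Wf f ((1 - α)⁻¹ • μt) ((1 - α)⁻¹ • νt) :=
    Wf_smul _ _ _ h1α0 h1αi
  rw [smul_smul, smul_smul, ENNReal.mul_inv_cancel h1α0 h1αi, one_smul ℝ≥0∞ μt,
    one_smul ℝ≥0∞ νt] at hsc
  calc Wf f μ ν = Wf f (μt + σ) (νt + σ) := by rw [hμ, hν]
  _ = Wf f μt νt := Wf_add_common hf_concave hf0 hf_pos μt νt σ hmass
  _ = (1 - α) * Wf f ((1 - α)⁻¹ • μt) ((1 - α)⁻¹ • νt) := hsc
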